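/- For every ε ∈ [0,1] and every function f : {0,1}^n → ℝ≥0, the 2-norm of T_ε f is at most the (1+ε²)-norm of f, where T_ε f(x) = E[f(Y)] with Y obtained from x by independently keeping each coordinate with probability (1+ε)/2 and flipping it otherwise, and norms are with respect to the uniform measure on {0,1}^n. -/

import Mathlib

open Finset Real

/-- For `0 ≤ q ≤ 1` and `t ∈ [0,1]`: `2*q*t ≤ (1+t)^q - (1-t)^q`. -/
lemma aux_deriv_ineq {q t : ℝ} (hq0 : 0 ≤ q) (hq1 : q ≤ 1) (ht0 : 0 ≤ t) (ht1 : t ≤ 1) :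
    2 * q * t ≤ (1 + t) ^ q - (1 - t) ^ q := by
  rcases eq_or_lt_of_le hq0 with rfl | hq0'
  · simp [Real.rpow_zero]
  set g : ℝ → ℝ := fun s => (1 + s) ^ q - (1 - s) ^ q - 2 * q * s with hg
  have hcont : ContinuousOn g (Set.Icc 0 1) := by
    apply ContinuousOn.sub
    apply ContinuousOn.sub
    · exact ((continuous_const.add continuous_id).continuousOn).rpow_const
        (fun x _ => Or.inr hq0'.le)
    · exact ((continuous_const.sub continuous_id).continuousOn).rpow_const
        (fun x _ => Or.inr hq0'.le)
    · exact (continuous_const.mul continuous_id).continuousOn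
  have hderiv : ∀ s ∈ Set.Ioo (0:ℝ) 1, HasDerivAt g
      (1 * q * (1+s)^(q-1) - (-1) * q * (1-s)^(q-1) - 2*q) s := by
    intro s hs
    have h1 : (0:ℝ) < 1 + s := by linarith [hs.1]
    have h2 : (0:ℝ) < 1 - s := by linarith [hs.2]
    have d1 : HasDerivAt (fun x : ℝ => (1 + x) ^ q) (1 * q * (1+s)^(q-1)) s :=
      ((hasDerivAt_id s).const_add 1).rpow_const (Or.inl h1.ne')
    have d2 : HasDerivAt (fun x : ℝ => (1 - x) ^ q) ((-1) * q * (1-s)^(q-1)) s :=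
      ((hasDerivAt_id s).const_sub 1).rpow_const (Or.inl h2.ne')
    have d3 : HasDerivAt (fun x : ℝ => 2 * q * x) (2*q) s := by
      simpa using (hasDerivAt_id s).const_mul (2*q)
    exact (d1.sub d2).sub d3
  have hnonneg : ∀ s ∈ Set.Ioo (0:ℝ) 1,
      0 ≤ 1 * q * (1+s)^(q-1) - (-1) * q * (1-s)^(q-1) - 2*q := by
    intro s hs
    have h1 : (0:ℝ) < 1 + s := by linarith [hs.1]
    have h2 : (0:ℝ) < 1 - s := by linarith [hs.2]
    set A := (1+s)^(q-1) with hA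
    set B := (1-s)^(q-1) with hB
    have hA0 : 0 ≤ A := Real.rpow_nonneg h1.le _
    have hB0 : 0 ≤ B := Real.rpow_nonneg h2.le _
    have hab : 1 ≤ A * B := by
      rw [hA, hB, ← Real.mul_rpow h1.le h2.le]
      have hlt : 0 < (1+s)*(1-s) := by nlinarith [hs.1, hs.2]
      have hle : (1+s)*(1-s) ≤ 1 := by nlinarith [hs.1, hs.2]
      exact Real.one_le_rpow_of_pos_of_le_one_of_nonpos hlt hle (by linarith)
    have key : 2 ≤ A + B := by
      set u := Real.sqrt A with hu
      set v := Real.sqrt B with hv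
      have hu2 : u^2 = A := Real.sq_sqrt hA0
      have hv2 : v^2 = B := Real.sq_sqrt hB0
      have hu0 : 0 ≤ u := Real.sqrt_nonneg _
      have hv0 : 0 ≤ v := Real.sqrt_nonneg _
      nlinarith [sq_nonneg (u - v), sq_nonneg (u*v - 1), mul_nonneg hu0 hv0, hab]
    nlinarith [key, hq0'.le]
  have hmono : MonotoneOn g (Set.Icc 0 1) := by
    apply monotoneOn_of_deriv_nonneg (convex_Icc 0 1) hcont
    · intro s hs
      rw [interior_Icc] at hs
      exact (hderiv s hs).differentiableAt.differentiableWithinAt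
    · intro s hs
      rw [interior_Icc] at hs
      rw [(hderiv s hs).deriv]
      exact hnonneg s hs
  have h0 : g 0 = 0 := by simp [hg]
  have := hmono (Set.mem_Icc.2 ⟨le_refl 0, zero_le_one⟩) (Set.mem_Icc.2 ⟨ht0, ht1⟩) ht0
  rw [h0] at this
  simp only [hg] at this
  linarith
/-- For `1 ≤ p ≤ 2`, `t ∈ [0,1]`: `1 + p*(p-1)/2*t^2 ≤ ((1+t)^p + (1-t)^p)/2`. -/
lemma aux_taylor {p t : ℝ} (hp1 : 1 ≤ p) (hp2 : p ≤ 2) (ht0 : 0 ≤ t) (ht1 : t ≤ 1) :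
    1 + p * (p-1) / 2 * t^2 ≤ ((1 + t) ^ p + (1 - t) ^ p) / 2 := by
  have hp0 : (0:ℝ) < p := lt_of_lt_of_le one_pos hp1
  set h : ℝ → ℝ := fun s => ((1 + s) ^ p + (1 - s) ^ p) / 2 - 1 - p * (p-1) / 2 * s^2 with hh
  have hcont : ContinuousOn h (Set.Icc 0 1) := by
    apply ContinuousOn.sub
    apply ContinuousOn.sub
    · apply ContinuousOn.div_const
      apply ContinuousOn.add
      · exact ((continuous_const.add continuous_id).continuousOn).rpow_const
          (fun x _ => Or.inr hp0.le)
      · exact ((continuous_const.sub continuous_id).continuousOn).rpow_const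
          (fun x _ => Or.inr hp0.le)
    · exact continuousOn_const
    · exact (continuous_const.mul (continuous_pow 2)).continuousOn
  have hderiv : ∀ s ∈ Set.Ioo (0:ℝ) 1, HasDerivAt h
      ((1 * p * (1+s)^(p-1) + (-1) * p * (1-s)^(p-1)) / 2 - p * (p-1) / 2 * (2*s)) s := by
    intro s hs
    have h1 : (0:ℝ) < 1 + s := by linarith [hs.1]
    have h2 : (0:ℝ) < 1 - s := by linarith [hs.2]
    have d1 : HasDerivAt (fun x : ℝ => (1 + x) ^ p) (1 * p * (1+s)^(p-1)) s :=
      ((hasDerivAt_id s).const_add 1).rpow_const (Or.inl h1.ne')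
    have d2 : HasDerivAt (fun x : ℝ => (1 - x) ^ p) ((-1) * p * (1-s)^(p-1)) s :=
      ((hasDerivAt_id s).const_sub 1).rpow_const (Or.inl h2.ne')
    have d3 : HasDerivAt (fun x : ℝ => p * (p-1) / 2 * x^2) (p * (p-1)/2 * (2*s)) s := by
      have := ((hasDerivAt_pow 2 s).const_mul (p*(p-1)/2))
      simpa [mul_comm, mul_assoc, mul_left_comm] using this
    exact (((d1.add d2).div_const 2).sub_const 1).sub d3
  have hnonneg : ∀ s ∈ Set.Ioo (0:ℝ) 1,
      0 ≤ (1 * p * (1+s)^(p-1) + (-1) * p * (1-s)^(p-1)) / 2 - p * (p-1) / 2 * (2*s) := by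
    intro s hs
    have key := aux_deriv_ineq (q := p - 1) (t := s) (by linarith) (by linarith)
      hs.1.le hs.2.le
    nlinarith [key, hp0.le]
  have hmono : MonotoneOn h (Set.Icc 0 1) := by
    apply monotoneOn_of_deriv_nonneg (convex_Icc 0 1) hcont
    · intro s hs
      rw [interior_Icc] at hs
      exact (hderiv s hs).differentiableAt.differentiableWithinAt
    · intro s hs
      rw [interior_Icc] at hs
      rw [(hderiv s hs).deriv]
      exact hnonneg s hs
  have h0 : h 0 = 0 := by simp [hh]
  have := hmono (Set.mem_Icc.2 ⟨le_refl 0, zero_le_one⟩) (Set.mem_Icc.2 ⟨ht0, ht1⟩) ht0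
  rw [h0] at this
  simp only [hh] at this
  linarith

/-- Normalized two-point inequality: `1 + ε²t² ≤ (((1+t)^p+(1-t)^p)/2)^(2/p)` with `p = 1+ε²`. -/
lemma aux_twopoint_norm {ε t : ℝ} (hε0 : 0 ≤ ε) (hε1 : ε ≤ 1) (ht0 : 0 ≤ t) (ht1 : t ≤ 1) :
    1 + ε^2 * t^2 ≤ (((1 + t) ^ (1+ε^2) + (1 - t) ^ (1+ε^2)) / 2) ^ (2 / (1+ε^2)) := by
  set p := 1 + ε^2 with hp
  have hp1 : 1 ≤ p := by nlinarith
  have hp2 : p ≤ 2 := by nlinarith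
  have hp0 : (0:ℝ) < p := by linarith
  have hB : 1 + ε^2 * t^2 ≥ 0 := by nlinarith
  -- Step 1: (1+ε²t²)^(p/2) ≤ 1 + (p/2)·ε²t² (Bernoulli)
  have bern : (1 + ε^2 * t^2) ^ (p/2) ≤ 1 + (p/2) * (ε^2 * t^2) :=
    rpow_one_add_le_one_add_mul_self (by nlinarith) (by linarith) (by linarith)
  -- Step 2: 1 + (p/2)·ε²t² ≤ ((1+t)^p + (1-t)^p)/2 since p-1 = ε²
  have taylor := aux_taylor hp1 hp2 ht0 ht1
  have step2 : 1 + (p/2) * (ε^2 * t^2) ≤ ((1 + t) ^ p + (1 - t) ^ p) / 2 := by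
    have : p - 1 = ε^2 := by rw [hp]; ring
    nlinarith [taylor]
  have chain : (1 + ε^2 * t^2) ^ (p/2) ≤ ((1 + t) ^ p + (1 - t) ^ p) / 2 :=
    bern.trans step2
  -- raise to the power 2/p
  have hmono := Real.rpow_le_rpow (Real.rpow_nonneg hB _) chain (by positivity : (0:ℝ) ≤ 2/p)
  have hpe : (p/2) * (2/p) = 1 := by field_simp
  rwa [← Real.rpow_mul hB, hpe, Real.rpow_one] at hmono
/-- Two-point hypercontractivity for nonnegative reals. -/
lemma aux_twopoint {ε a c : ℝ} (hε0 : 0 ≤ ε) (hε1 : ε ≤ 1) (ha : 0 ≤ a) (hc : 0 ≤ c) :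
    ((1+ε)/2 * a + (1-ε)/2 * c)^(2:ℕ) + ((1-ε)/2 * a + (1+ε)/2 * c)^(2:ℕ)
      ≤ 2 * ((a ^ (1+ε^2) + c ^ (1+ε^2)) / 2) ^ (2 / (1+ε^2)) := by
  have hp0 : (0:ℝ) < 1+ε^2 := by positivity
  rcases eq_or_lt_of_le (add_nonneg ha hc) with h0 | hs
  · have ha0 : a = 0 := by nlinarith
    have hc0 : c = 0 := by nlinarith
    rw [ha0, hc0]
    rw [Real.zero_rpow hp0.ne']
    norm_num
    positivity
  · have hac : a + c ≠ 0 := by linarith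
    set s : ℝ := (a+c)/2 with hsdef
    have hs0 : 0 < s := by rw [hsdef]; linarith
    set t : ℝ := (a-c)/(a+c) with htdef
    have hat : a = s*(1+t) := by rw [hsdef, htdef]; field_simp; ring
    have hct : c = s*(1-t) := by rw [hsdef, htdef]; field_simp; ring
    have ht1 : |t| ≤ 1 := by
      rw [htdef, abs_div, abs_of_pos (by linarith : (0:ℝ) < a + c), div_le_one (by linarith)]
      rw [abs_le]; constructor <;> linarith
    have h1t : 0 ≤ 1 + t := by cases abs_le.1 ht1; linarith
    have h1mt : 0 ≤ 1 - t := by cases abs_le.1 ht1; linarith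
    have key := aux_twopoint_norm hε0 hε1 (abs_nonneg t) ht1
    have habs : (1+|t|) ^ (1+ε^2) + (1-|t|) ^ (1+ε^2)
        = (1+t) ^ (1+ε^2) + (1-t) ^ (1+ε^2) := by
      rcases abs_cases t with ⟨h,_⟩ | ⟨h,_⟩
      · rw [h]
      · rw [h]; rw [show 1 + -t = 1 - t by ring, show 1 - -t = 1 + t by ring, add_comm]
    rw [habs, sq_abs] at key
    have hBpos : (0:ℝ) ≤ ((1+t)^(1+ε^2) + (1-t)^(1+ε^2))/2 := by
      have := Real.rpow_nonneg h1t (1+ε^2)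
      have := Real.rpow_nonneg h1mt (1+ε^2)
      linarith
    have expand : a^(1+ε^2) + c^(1+ε^2) = s^(1+ε^2) * ((1+t)^(1+ε^2) + (1-t)^(1+ε^2)) := by
      rw [hat, hct, Real.mul_rpow hs0.le h1t, Real.mul_rpow hs0.le h1mt]; ring
    have step1 : ((1+ε)/2 * a + (1-ε)/2 * c)^(2:ℕ) + ((1-ε)/2 * a + (1+ε)/2 * c)^(2:ℕ)
        = 2*s^(2:ℕ)*(1+ε^2*t^2) := by rw [hat, hct]; ring
    have step2 : 2*s^(2:ℕ)*(1+ε^2*t^2)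
        ≤ 2*s^(2:ℕ) * ((((1+t)^(1+ε^2)+(1-t)^(1+ε^2))/2)^(2/(1+ε^2))) :=
      mul_le_mul_of_nonneg_left key (by positivity)
    have step3 : 2*s^(2:ℕ) * ((((1+t)^(1+ε^2)+(1-t)^(1+ε^2))/2)^(2/(1+ε^2)))
        = 2 * ((a^(1+ε^2) + c^(1+ε^2))/2)^(2/(1+ε^2)) := by
      rw [expand, mul_div_assoc,
        Real.mul_rpow (Real.rpow_nonneg hs0.le _) hBpos,
        ← Real.rpow_natCast s 2, ← Real.rpow_mul hs0.le]
      rw [show (1+ε^2) * (2/(1+ε^2)) = ((2:ℕ):ℝ) by push_cast; field_simp]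
      ring
    rw [step1]
    exact step2.trans_eq step3
lemma cube_sum {n : ℕ} (g : (Fin (n+1) → Bool) → ℝ) :
    ∑ x : Fin (n+1) → Bool, g x
      = ∑ y : Fin n → Bool, (g (Fin.cons true y) + g (Fin.cons false y)) := by
  rw [← (Fin.consEquiv (fun _ => Bool)).sum_comp g, Fintype.sum_prod_type,
    Fintype.sum_bool, ← Finset.sum_add_distrib]
  rfl

noncomputable def Tn (ε : ℝ) {n : ℕ} (g : (Fin n → Bool) → ℝ) (x : Fin n → Bool) : ℝ :=
  ∑ y, (∏ i, if x i = y i then (1+ε)/2 else (1-ε)/2) * g y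

noncomputable def Gb (ε : ℝ) {n : ℕ} (f : (Fin (n+1) → Bool) → ℝ) (b : Bool) :
    (Fin n → Bool) → ℝ :=
  fun y => (if b = true then (1+ε)/2 else (1-ε)/2) * f (Fin.cons true y)
    + (if b = false then (1+ε)/2 else (1-ε)/2) * f (Fin.cons false y)

lemma Tn_cons (ε : ℝ) {n : ℕ} (f : (Fin (n+1) → Bool) → ℝ) (b : Bool) (x : Fin n → Bool) :
    Tn ε f (Fin.cons b x) = Tn ε (Gb ε f b) x := by
  unfold Tn Gb
  rw [cube_sum]
  apply Finset.sum_congr rfl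
  intro y _
  simp only [Fin.prod_univ_succ, Fin.cons_zero, Fin.cons_succ]
  ring

lemma aux_main (ε : ℝ) (hε0 : 0 ≤ ε) (hε1 : ε ≤ 1) :
    ∀ (n : ℕ) (f : (Fin n → Bool) → ℝ), (∀ x, 0 ≤ f x) →
    (((2:ℝ)^n)⁻¹ * ∑ x : Fin n → Bool, (Tn ε f x) ^ (2:ℕ)) ^ ((2:ℝ)⁻¹)
      ≤ (((2:ℝ)^n)⁻¹ * ∑ x : Fin n → Bool, f x ^ (1 + ε^2)) ^ ((1 + ε^2)⁻¹) := by
  have hq0 : (0:ℝ) < 1 + ε^2 := by positivity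
  have hq1 : (1:ℝ) ≤ 1 + ε^2 := by nlinarith
  intro n
  induction n with
  | zero =>
    intro f hf
    have huniq : ∀ g : (Fin 0 → Bool) → ℝ, ∑ x : Fin 0 → Bool, g x = g ![] := by
      intro g
      rw [show (Finset.univ : Finset (Fin 0 → Bool)) = {![]} from
        Finset.eq_singleton_iff_unique_mem.2
          ⟨Finset.mem_univ _, fun x _ => funext (fun i => Fin.elim0 i)⟩, Finset.sum_singleton]
    unfold Tn
    simp only [huniq, pow_zero, inv_one, one_mul, Fin.prod_univ_zero]
    rw [← Real.rpow_natCast (f ![]) 2, ← Real.rpow_mul (hf ![]),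
      ← Real.rpow_mul (hf ![])]
    norm_num
    rw [mul_inv_cancel₀ hq0.ne', Real.rpow_one]
  | succ n ih =>
    intro f hf
    have hw : ∀ b c : Bool, (0:ℝ) ≤ if b = c then (1+ε)/2 else (1-ε)/2 := by
      intro b c; split <;> linarith
    have hGnn : ∀ b y, 0 ≤ Gb ε f b y := by
      intro b y
      unfold Gb
      apply add_nonneg <;> exact mul_nonneg (by split <;> linarith) (hf _)
    -- The p-mass of the two restrictions
    set C : Bool → ℝ := fun c => ((2:ℝ)^n)⁻¹ * ∑ y : Fin n → Bool,
      f (Fin.cons c y) ^ (1+ε^2) with hCdef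
    have hCnn : ∀ c, 0 ≤ C c := by
      intro c
      exact mul_nonneg (by positivity)
        (Finset.sum_nonneg fun y _ => Real.rpow_nonneg (hf _) _)
    set a : Bool → ℝ := fun c => C c ^ (1+ε^2)⁻¹ with hadef
    have han : ∀ c, 0 ≤ a c := fun c => Real.rpow_nonneg (hCnn c) _
    have haq : ∀ c, a c ^ (1+ε^2) = C c := by
      intro c
      rw [hadef]
      rw [← Real.rpow_mul (hCnn c), inv_mul_cancel₀ hq0.ne', Real.rpow_one]
    -- Minkowski for each b
    have hMink : ∀ b, (((2:ℝ)^n)⁻¹ * ∑ y : Fin n → Bool, Gb ε f b y ^ (1+ε^2)) ^ ((1+ε^2)⁻¹)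
        ≤ (if b = true then (1+ε)/2 else (1-ε)/2) * a true
          + (if b = false then (1+ε)/2 else (1-ε)/2) * a false := by
      intro b
      set wT : ℝ := if b = true then (1+ε)/2 else (1-ε)/2 with hwT
      set wF : ℝ := if b = false then (1+ε)/2 else (1-ε)/2 with hwF
      have hwT0 : 0 ≤ wT := hw b true
      have hwF0 : 0 ≤ wF := hw b false
      have lp := Real.Lp_add_le (Finset.univ : Finset (Fin n → Bool))
        (fun y => wT * f (Fin.cons true y)) (fun y => wF * f (Fin.cons false y)) hq1
      have e1 : ∑ y : Fin n → Bool, |wT * f (Fin.cons true y) + wF * f (Fin.cons false y)| ^ (1+ε^2)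
          = ∑ y : Fin n → Bool, Gb ε f b y ^ (1+ε^2) := by
        apply Finset.sum_congr rfl
        intro y _
        have hrfl : wT * f (Fin.cons true y) + wF * f (Fin.cons false y) = Gb ε f b y := rfl
        rw [hrfl, abs_of_nonneg (hGnn b y)]
      have e2 : ∀ (w : ℝ) (hw0 : 0 ≤ w) (c : Bool),
          (∑ y : Fin n → Bool, |w * f (Fin.cons c y)| ^ (1+ε^2)) ^ (1/(1+ε^2))
            = w * (∑ y : Fin n → Bool, f (Fin.cons c y) ^ (1+ε^2)) ^ (1/(1+ε^2)) := by
        intro w hw0 c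
        have : ∀ y : Fin n → Bool, |w * f (Fin.cons c y)| ^ (1+ε^2)
            = w ^ (1+ε^2) * f (Fin.cons c y) ^ (1+ε^2) := by
          intro y
          rw [abs_of_nonneg (mul_nonneg hw0 (hf _)), Real.mul_rpow hw0 (hf _)]
        rw [Finset.sum_congr rfl (fun y _ => this y), ← Finset.mul_sum,
          Real.mul_rpow (Real.rpow_nonneg hw0 _)
            (Finset.sum_nonneg fun y _ => Real.rpow_nonneg (hf _) _),
          ← Real.rpow_mul hw0, mul_one_div, div_self hq0.ne', Real.rpow_one]
      rw [e1, e2 wT hwT0 true, e2 wF hwF0 false] at lp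
      -- multiply by k = ((2^n)⁻¹)^(1/(1+ε^2))
      have hk : (0:ℝ) ≤ (((2:ℝ)^n)⁻¹) ^ (1/(1+ε^2)) := Real.rpow_nonneg (by positivity) _
      have lp2 := mul_le_mul_of_nonneg_left lp hk
      have hsplit : ∀ S : ℝ, 0 ≤ S → ((((2:ℝ)^n)⁻¹) * S) ^ ((1+ε^2)⁻¹)
          = (((2:ℝ)^n)⁻¹) ^ (1/(1+ε^2)) * S ^ (1/(1+ε^2)) := by
        intro S hS
        rw [Real.mul_rpow (by positivity) hS, one_div]
      rw [hsplit _ (Finset.sum_nonneg fun y _ => Real.rpow_nonneg (hGnn b y) _)]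
      calc (((2:ℝ)^n)⁻¹) ^ (1/(1+ε^2)) * (∑ y : Fin n → Bool, Gb ε f b y ^ (1+ε^2)) ^ (1/(1+ε^2))
          ≤ (((2:ℝ)^n)⁻¹) ^ (1/(1+ε^2)) *
            (wT * (∑ y : Fin n → Bool, f (Fin.cons true y) ^ (1+ε^2)) ^ (1/(1+ε^2))
             + wF * (∑ y : Fin n → Bool, f (Fin.cons false y) ^ (1+ε^2)) ^ (1/(1+ε^2))) := lp2
        _ = wT * a true + wF * a false := by
            rw [hadef]
            dsimp only
            rw [hCdef]
            dsimp only
            rw [hsplit _ (Finset.sum_nonneg fun y _ => Real.rpow_nonneg (hf _) _),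
              hsplit _ (Finset.sum_nonneg fun y _ => Real.rpow_nonneg (hf _) _)]
            ring
    -- per-b squared bound
    have hAle : ∀ b, ((2:ℝ)^n)⁻¹ * ∑ x : Fin n → Bool, (Tn ε (Gb ε f b) x) ^ (2:ℕ)
        ≤ ((if b = true then (1+ε)/2 else (1-ε)/2) * a true
          + (if b = false then (1+ε)/2 else (1-ε)/2) * a false) ^ (2:ℕ) := by
      intro b
      have hA0 : 0 ≤ ((2:ℝ)^n)⁻¹ * ∑ x : Fin n → Bool, (Tn ε (Gb ε f b) x) ^ (2:ℕ) :=
        mul_nonneg (by positivity) (Finset.sum_nonneg fun x _ => sq_nonneg _)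
      have h1 := (ih (Gb ε f b) (hGnn b)).trans (hMink b)
      calc ((2:ℝ)^n)⁻¹ * ∑ x : Fin n → Bool, (Tn ε (Gb ε f b) x) ^ (2:ℕ)
          = ((((2:ℝ)^n)⁻¹ * ∑ x : Fin n → Bool, (Tn ε (Gb ε f b) x) ^ (2:ℕ)) ^ ((2:ℝ)⁻¹)) ^ (2:ℕ) := by
            rw [← Real.rpow_natCast (_ ^ ((2:ℝ)⁻¹)) 2, ← Real.rpow_mul hA0]
            norm_num
        _ ≤ _ := pow_le_pow_left₀ (Real.rpow_nonneg hA0 _) h1 2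
    -- two-point inequality
    have h2pt := aux_twopoint hε0 hε1 (han true) (han false)
    rw [haq true, haq false] at h2pt
    -- assemble
    have hLHSsum : ∑ x : Fin (n+1) → Bool, (Tn ε f x) ^ (2:ℕ)
        = (∑ x : Fin n → Bool, (Tn ε (Gb ε f true) x) ^ (2:ℕ))
          + ∑ x : Fin n → Bool, (Tn ε (Gb ε f false) x) ^ (2:ℕ) := by
      rw [cube_sum (fun x => (Tn ε f x) ^ (2:ℕ)), Finset.sum_add_distrib]
      congr 1 <;> exact Finset.sum_congr rfl fun x _ => by rw [Tn_cons]
    have hRHSsum : ((2:ℝ)^(n+1))⁻¹ * ∑ x : Fin (n+1) → Bool, f x ^ (1+ε^2)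
        = (C true + C false)/2 := by
      rw [cube_sum (fun x => f x ^ (1+ε^2)), Finset.sum_add_distrib, hCdef]
      dsimp only
      rw [pow_succ, mul_inv]
      ring
    have hBnn : (0:ℝ) ≤ (C true + C false)/2 := by
      have := hCnn true; have := hCnn false; linarith
    have key : ((2:ℝ)^(n+1))⁻¹ * ∑ x : Fin (n+1) → Bool, (Tn ε f x) ^ (2:ℕ)
        ≤ ((C true + C false)/2) ^ (2/(1+ε^2)) := by
      rw [hLHSsum]
      have expand : ((2:ℝ)^(n+1))⁻¹ * ((∑ x : Fin n → Bool, (Tn ε (Gb ε f true) x) ^ (2:ℕ))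
            + ∑ x : Fin n → Bool, (Tn ε (Gb ε f false) x) ^ (2:ℕ))
          = 2⁻¹ * ((((2:ℝ)^n)⁻¹ * ∑ x : Fin n → Bool, (Tn ε (Gb ε f true) x) ^ (2:ℕ))
            + (((2:ℝ)^n)⁻¹ * ∑ x : Fin n → Bool, (Tn ε (Gb ε f false) x) ^ (2:ℕ))) := by
        rw [pow_succ, mul_inv]
        ring
      rw [expand]
      have hs := add_le_add (hAle true) (hAle false)
      simp only [if_pos rfl, reduceIte, Bool.false_eq_true, Bool.true_eq_false, if_false] at hs
      calc 2⁻¹ * ((((2:ℝ)^n)⁻¹ * ∑ x : Fin n → Bool, (Tn ε (Gb ε f true) x) ^ (2:ℕ))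
            + (((2:ℝ)^n)⁻¹ * ∑ x : Fin n → Bool, (Tn ε (Gb ε f false) x) ^ (2:ℕ)))
          ≤ 2⁻¹ * (((1+ε)/2 * a true + (1-ε)/2 * a false) ^ (2:ℕ)
            + ((1-ε)/2 * a true + (1+ε)/2 * a false) ^ (2:ℕ)) := by
            apply mul_le_mul_of_nonneg_left _ (by norm_num : (0:ℝ) ≤ 2⁻¹)
            convert hs using 2
        _ ≤ 2⁻¹ * (2 * ((C true + C false)/2) ^ (2/(1+ε^2))) :=
            mul_le_mul_of_nonneg_left h2pt (by norm_num)
        _ = ((C true + C false)/2) ^ (2/(1+ε^2)) := by ring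
    have hL0 : 0 ≤ ((2:ℝ)^(n+1))⁻¹ * ∑ x : Fin (n+1) → Bool, (Tn ε f x) ^ (2:ℕ) :=
      mul_nonneg (by positivity) (Finset.sum_nonneg fun x _ => sq_nonneg _)
    have final := Real.rpow_le_rpow hL0 key (by norm_num : (0:ℝ) ≤ (2:ℝ)⁻¹)
    rw [← Real.rpow_mul hBnn] at final
    rw [show (2/(1+ε^2)) * (2:ℝ)⁻¹ = (1+ε^2)⁻¹ by field_simp] at final
    rw [hRHSsum]
    exact final

/-- Hypercontractivity: `|T_ε f|₂ ≤ |f|_{1+ε²}` on the Boolean cube with uniform measure,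
where `T_ε f x = E[f Y]` for `Y` obtained from `x` by keeping each bit with prob `(1+ε)/2`. -/
theorem hypercontractivity (n : ℕ) (ε : ℝ) (hε : ε ∈ Set.Icc (0:ℝ) 1)
    (f : (Fin n → Bool) → ℝ) (hf : ∀ x, 0 ≤ f x) :
    (((2:ℝ)^n)⁻¹ * ∑ x : Fin n → Bool,
        (∑ y : Fin n → Bool,
          (∏ i, if x i = y i then (1+ε)/2 else (1-ε)/2) * f y) ^ (2:ℕ)) ^ ((2:ℝ)⁻¹)
      ≤ (((2:ℝ)^n)⁻¹ * ∑ x : Fin n → Bool, f x ^ (1 + ε^2)) ^ ((1 + ε^2)⁻¹) := by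
  exact aux_main ε hε.1 hε.2 n f hf
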